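/- Let G be a finite simple graph that admits a 2-factor F with cycle components C_1, …, C_m such that, whenever two of these cycles are neighbors, repeated cycle-merging is possible: formally, suppose that for every partition of {C_1,…,C_m} induced by iteratively merging neighboring cycles there is a 4-cycle in G sharing one pair of opposite edges with two distinct current cycles whenever more than one cycle remains. Then G has a Hamiltonian cycle. In particular, if G is connected and every pair of neighboring cycles of any 2-factor arising during the merging process admits a separant 4-cycle, a Hamiltonian cycle of G can be constructed. -/

import Mathlib

variable {V : Type*}

/-- A subgraph is a cycle if it is nonempty, connected and every one of its
vertices has exactly two neighbours within it. -/
def SimpleGraph.Subgraph.IsCycleSubgraph {G : SimpleGraph V}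
    (C : G.Subgraph) : Prop :=
  C.Connected ∧ ∀ v ∈ C.verts, (C.neighborSet v).ncard = 2

/-- One step of the cycle-merging process: two distinct cycles `C₁, C₂` of the
current family `S` admitting a separant 4-cycle `a, b, c, d` (the edge `ab`
lies in `C₁`, the edge `cd` lies in `C₂`, and the edges `bc`, `ad` lie in `G`
but in neither cycle) are replaced by the single merged cycle
`(C₁ ∪ C₂) ⊕ C_f`, obtained by deleting the edges `ab`, `cd` and adding the
edges `bc`, `ad`. -/
def MergeStep {G : SimpleGraph V} (S T : Set G.Subgraph) : Prop :=
  ∃ C₁ ∈ S, ∃ C₂ ∈ S, C₁ ≠ C₂ ∧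
    ∃ (a b c d : V) (hbc : G.Adj b c) (hda : G.Adj d a),
      C₁.Adj a b ∧ C₂.Adj c d ∧
      ¬ C₁.Adj b c ∧ ¬ C₂.Adj b c ∧ ¬ C₁.Adj a d ∧ ¬ C₂.Adj a d ∧
      T = (S \ {C₁, C₂}) ∪
        {(C₁ ⊔ C₂).deleteEdges {s(a, b), s(c, d)} ⊔ G.subgraphOfAdj hbc ⊔
          G.subgraphOfAdj hda}

namespace CycleMergeAux


open SimpleGraph

variable {G : SimpleGraph V}

lemma support_subset_verts {C : G.Subgraph} :
    ∀ {u w : V} (p : G.Walk u w), (∀ e ∈ p.edges, e ∈ C.edgeSet) → u ∈ C.verts →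
      ∀ v ∈ p.support, v ∈ C.verts := by
  intro u w p
  induction p with
  | nil =>
    intro _ hu v hv
    simp only [Walk.support_nil, List.mem_singleton] at hv
    subst hv; exact hu
  | @cons u x w h q ih =>
    intro hE hu v hv
    rw [Walk.support_cons, List.mem_cons] at hv
    have hadj : C.Adj u x := (Subgraph.mem_edgeSet).mp (hE _ (by simp))
    rcases hv with rfl | hv
    · exact hu
    · exact ih (fun e he => hE e (by simp [he])) (C.edge_vert hadj.symm) v hv

lemma exists_crossing {C : G.Subgraph} {S : Set V} :
    ∀ {u w : V} (p : G.Walk u w), (∀ e ∈ p.edges, e ∈ C.edgeSet) → u ∈ S → w ∉ S →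
      ∃ x y, C.Adj x y ∧ x ∈ S ∧ y ∉ S := by
  intro u w p
  induction p with
  | nil => intro _ hu hw; exact absurd hu hw
  | @cons u x w h q ih =>
    intro hE hu hw
    by_cases hx : x ∈ S
    · exact ih (fun e he => hE e (by simp [he])) hx hw
    · exact ⟨u, x, (Subgraph.mem_edgeSet).mp (hE _ (by simp)), hu, hx⟩

lemma concat_isPath {u v w : V} {p : G.Walk u v} (hp : p.IsPath) (h : G.Adj v w)
    (hw : w ∉ p.support) : (p.concat h).IsPath := by
  rw [← Walk.isPath_reverse_iff, Walk.reverse_concat, Walk.cons_isPath_iff]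
  exact ⟨hp.reverse, by rwa [Walk.support_reverse, List.mem_reverse]⟩

lemma endpoint_partner {a z : V} {P : G.Walk a z} (hP : P.IsPath) (hne : a ≠ z) :
    ∃ u, s(z, u) ∈ P.edges ∧ ∀ y, s(z, y) ∈ P.edges → y = u := by
  have hnil : ¬ P.reverse.Nil := Walk.not_nil_of_ne (Ne.symm hne)
  obtain ⟨u, h, t, hPr⟩ := Walk.not_nil_iff.mp hnil
  have hmem : ∀ {y : V}, s(z, y) ∈ P.edges ↔ s(z, y) ∈ (Walk.cons h t).edges := by
    intro y
    rw [← hPr, Walk.edges_reverse, List.mem_reverse]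
  have hzt : z ∉ t.support := by
    have h2 := hP.reverse
    rw [hPr, Walk.cons_isPath_iff] at h2
    exact h2.2
  refine ⟨u, ?_, ?_⟩
  · rw [hmem]; simp
  · intro y hy
    rw [hmem, Walk.edges_cons, List.mem_cons] at hy
    rcases hy with hy | hy
    · rw [Sym2.eq_iff] at hy
      rcases hy with ⟨_, rfl⟩ | ⟨h1, _⟩
      · rfl
      · exact absurd h1 h.ne
    · exact absurd (Walk.fst_mem_support_of_mem_edges t hy) hzt

lemma internal_degree [Fintype V] [DecidableEq V] {C : G.Subgraph} {a z x y : V} {P : G.Walk a z}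
    (hP : P.IsPath) (hE : ∀ e ∈ P.edges, e ∈ C.edgeSet) (hy : y ∈ P.support)
    (hya : y ≠ a) (hyz : y ≠ z) (hadj : C.Adj y x) (hxe : s(y, x) ∉ P.edges)
    (hdeg : (C.neighborSet y).ncard = 2) : False := by
  have hqnil : ¬ (P.takeUntil y hy).reverse.Nil := Walk.not_nil_of_ne hya
  obtain ⟨u₁, h₁, t₁, hq1⟩ := Walk.not_nil_iff.mp hqnil
  have he₁ : s(y, u₁) ∈ (P.takeUntil y hy).edges := by
    rw [← List.mem_reverse, ← Walk.edges_reverse, hq1]; simp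
  have he₁P : s(y, u₁) ∈ P.edges := Walk.edges_takeUntil_subset P hy he₁
  have hrnil : ¬ (P.dropUntil y hy).Nil := Walk.not_nil_of_ne hyz
  obtain ⟨u₂, h₂, t₂, hr2⟩ := Walk.not_nil_iff.mp hrnil
  have he₂ : s(y, u₂) ∈ (P.dropUntil y hy).edges := by rw [hr2]; simp
  have he₂P : s(y, u₂) ∈ P.edges := Walk.edges_dropUntil_subset P hy he₂
  have hu₁x : u₁ ≠ x := fun h => hxe (h ▸ he₁P)
  have hu₂x : u₂ ≠ x := fun h => hxe (h ▸ he₂P)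
  have hnodup : ((P.takeUntil y hy).support ++ (P.dropUntil y hy).support.tail).Nodup := by
    have h3 := hP.support_nodup
    rwa [← Walk.take_spec P hy, Walk.support_append] at h3
  have hu₁q : u₁ ∈ (P.takeUntil y hy).support :=
    Walk.snd_mem_support_of_mem_edges _ he₁
  have hu₂r : u₂ ∈ (P.dropUntil y hy).support.tail := by
    rw [hr2]; simpa using t₂.start_mem_support
  have hu12 : u₁ ≠ u₂ := by
    intro h
    exact (List.nodup_append'.mp hnodup).2.2 hu₁q (h ▸ hu₂r)
  have hsub : ({u₁, u₂, x} : Set V) ⊆ C.neighborSet y := by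
    intro v hv
    simp only [Set.mem_insert_iff, Set.mem_singleton_iff] at hv
    rcases hv with rfl | rfl | rfl
    · exact (Subgraph.mem_edgeSet).mp (hE _ he₁P)
    · exact (Subgraph.mem_edgeSet).mp (hE _ he₂P)
    · exact hadj
  have h3 : ({u₁, u₂, x} : Set V).ncard = 3 := by
    rw [Set.ncard_insert_of_notMem (by simp [hu12, hu₁x]),
      Set.ncard_insert_of_notMem (by simp [hu₂x]), Set.ncard_singleton]
  have hle := Set.ncard_le_ncard hsub (C.neighborSet y).toFinite
  omega

lemma toSubgraph_le {M : G.Subgraph} :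
    ∀ {u w : V} (p : G.Walk u w), u ∈ M.verts → (∀ e ∈ p.edges, e ∈ M.edgeSet) →
      p.toSubgraph ≤ M := by
  intro u w p
  induction p with
  | nil =>
    intro hu _
    exact (SimpleGraph.singletonSubgraph_le_iff _ _).mpr hu
  | @cons u x w h q ih =>
    intro hu hE
    have hadj : M.Adj u x := (Subgraph.mem_edgeSet).mp (hE _ (by simp))
    refine sup_le ?_ (ih (M.edge_vert hadj.symm) (fun e he => hE e (by simp [he])))
    exact SimpleGraph.subgraphOfAdj_le_of_adj M hadj


lemma cycle_struct [Fintype V] [DecidableEq V] {C : G.Subgraph}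
    (hC : C.IsCycleSubgraph) {a b : V} (hab : C.Adj a b) :
    ∃ q : G.Walk b a, q.IsPath ∧ s(a, b) ∉ q.edges ∧
      (∀ e ∈ q.edges, e ∈ C.edgeSet) ∧ ∀ v ∈ C.verts, v ∈ q.support := by
  obtain ⟨hconn, hdeg⟩ := hC
  have hGab : G.Adj a b := hab.adj_sub
  set L : Set ℕ := {n | ∃ (x : V) (p : G.Walk b x),
    ((Walk.cons hGab p).IsPath ∧ ∀ e ∈ (Walk.cons hGab p).edges, e ∈ C.edgeSet) ∧
    p.length = n} with hL
  have hL0 : 0 ∈ L := by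
    refine ⟨b, Walk.nil, ⟨?_, ?_⟩, rfl⟩
    · rw [Walk.cons_isPath_iff]
      exact ⟨Walk.IsPath.nil, by simp [hGab.ne]⟩
    · intro e he
      simp only [Walk.edges_cons, Walk.edges_nil, List.mem_singleton] at he
      subst he
      exact (Subgraph.mem_edgeSet).mpr hab
  have hbdd : BddAbove L := by
    refine ⟨Fintype.card V, ?_⟩
    rintro n ⟨x, p, ⟨hp, _⟩, rfl⟩
    have := hp.length_lt
    simp only [Walk.length_cons] at this
    omega
  obtain ⟨x, p, ⟨hpath, hedges⟩, hlen⟩ := Nat.sSup_mem ⟨0, hL0⟩ hbdd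
  have hp' : p.IsPath := (Walk.cons_isPath_iff _ _).mp hpath |>.1
  have hans : a ∉ p.support := (Walk.cons_isPath_iff _ _).mp hpath |>.2
  -- maximality
  have hmax : ∀ y, C.Adj x y → y ∈ (Walk.cons hGab p).support := by
    intro y hy
    by_contra hy'
    have hyp : y ∉ p.support := fun h => hy' (by simp [h])
    have hmem : p.length + 1 ∈ L := by
      refine ⟨y, p.concat hy.adj_sub, ⟨?_, ?_⟩, by simp⟩
      · rw [← Walk.concat_cons]
        refine concat_isPath hpath hy.adj_sub hy'
      · intro e he
        rw [← Walk.concat_cons, Walk.edges_concat, List.concat_eq_append,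
          List.mem_append] at he
        rcases he with he | he
        · exact hedges e he
        · simp only [List.mem_singleton] at he
          subst he
          exact (Subgraph.mem_edgeSet).mpr hy
    have := le_csSup hbdd hmem
    omega
  have hax : x ≠ a := by
    rintro rfl
    exact hans p.end_mem_support
  have hsupv : ∀ v ∈ (Walk.cons hGab p).support, v ∈ C.verts :=
    support_subset_verts _ hedges (C.edge_vert hab)
  have hxb : x ≠ b := by
    rintro rfl
    have hpnil : p = Walk.nil := (Walk.isPath_iff_eq_nil).mp hp'
    subst hpnil
    have haN : a ∈ C.neighborSet x := hab.symm
    have h1 : (C.neighborSet x \ {a}).ncard = 1 := by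
      rw [Set.ncard_diff_singleton_of_mem haN, hdeg x (C.edge_vert hab.symm)]
    obtain ⟨z, hz⟩ := Set.nonempty_of_ncard_ne_zero (by rw [h1]; exact one_ne_zero)
    have hzadj : C.Adj x z := hz.1
    have hzs := hmax z hzadj
    simp only [Walk.support_cons, Walk.support_nil, List.mem_cons, List.mem_singleton,
      List.not_mem_nil, or_false] at hzs
    rcases hzs with rfl | rfl
    · exact hz.2 rfl
    · exact hzadj.adj_sub.ne rfl
  have hCxa : C.Adj x a := by
    by_contra hxa'
    obtain ⟨u, hu, huniq⟩ := endpoint_partner hpath hax.symm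
    obtain ⟨y₁, y₂, hy12, hNx⟩ := Set.ncard_eq_two.mp (hdeg x (hsupv x (Walk.end_mem_support _)))
    have key : ∀ y, C.Adj x y → s(x, y) ∈ (Walk.cons hGab p).edges := by
      intro y hy
      by_contra hne
      have hys : y ∈ (Walk.cons hGab p).support := hmax y hy
      have hya : y ≠ a := fun h => hxa' (h ▸ hy)
      have hyx : y ≠ x := hy.adj_sub.ne'
      refine internal_degree hpath hedges hys hya hyx hy.symm ?_
        (hdeg y (hsupv y hys))
      rwa [Sym2.eq_swap]
    have h1 : y₁ = u := huniq y₁ (key y₁ (by rw [← Subgraph.mem_neighborSet, hNx]; simp))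
    have h2 : y₂ = u := huniq y₂ (key y₂ (by rw [← Subgraph.mem_neighborSet, hNx]; simp))
    exact hy12 (h1.trans h2.symm)
  -- closed neighborhood claim
  obtain ⟨u, huE, huniq⟩ := endpoint_partner hpath hax.symm
  have hCxu : C.Adj x u := (Subgraph.mem_edgeSet).mp (hedges _ huE)
  have hua : u ≠ a := by
    rintro rfl
    rw [Walk.edges_cons, List.mem_cons] at huE
    rcases huE with h | h
    · rw [Sym2.eq_iff] at h
      rcases h with ⟨h1, _⟩ | ⟨h1, _⟩
      · exact hax h1
      · exact hxb h1
    · exact hans (Walk.snd_mem_support_of_mem_edges p h)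
  have hclosed : ∀ w ∈ (Walk.cons hGab p).support, ∀ z, C.Adj w z →
      z ∈ (Walk.cons hGab p).support := by
    intro w hw z hz
    by_contra hzs
    by_cases hwa : w = a
    · subst hwa
      have hsub : ({b, x} : Set V) ⊆ C.neighborSet w := by
        intro v hv
        simp only [Set.mem_insert_iff, Set.mem_singleton_iff] at hv
        rcases hv with rfl | rfl
        · exact hab
        · exact hCxa.symm
      have heq : ({b, x} : Set V) = C.neighborSet w :=
        Set.eq_of_subset_of_ncard_le hsub
          (by rw [hdeg w (C.edge_vert hab), Set.ncard_pair (Ne.symm hxb)])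
      have : z ∈ ({b, x} : Set V) := heq ▸ hz
      simp only [Set.mem_insert_iff, Set.mem_singleton_iff] at this
      rcases this with rfl | rfl
      · exact hzs (by simp [Walk.support_cons, p.start_mem_support])
      · exact hzs (by simp [Walk.support_cons, p.end_mem_support])
    by_cases hwx : w = x
    · subst hwx
      have hsub : ({u, a} : Set V) ⊆ C.neighborSet w := by
        intro v hv
        simp only [Set.mem_insert_iff, Set.mem_singleton_iff] at hv
        rcases hv with rfl | rfl
        · exact hCxu
        · exact hCxa
      have heq : ({u, a} : Set V) = C.neighborSet w :=
        Set.eq_of_subset_of_ncard_le hsub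
          (by rw [hdeg w (hsupv w hw), Set.ncard_pair hua])
      have : z ∈ ({u, a} : Set V) := heq ▸ hz
      simp only [Set.mem_insert_iff, Set.mem_singleton_iff] at this
      rcases this with rfl | rfl
      · exact hzs (Walk.snd_mem_support_of_mem_edges _ huE)
      · exact hzs (Walk.start_mem_support _)
    · refine internal_degree hpath hedges hw hwa hwx hz ?_ (hdeg w (hsupv w hw))
      intro h
      exact hzs (Walk.snd_mem_support_of_mem_edges _ h)
  have hcov : ∀ v ∈ C.verts, v ∈ (Walk.cons hGab p).support := by
    by_contra hcov'
    push_neg at hcov'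
    obtain ⟨v, hv, hvs⟩ := hcov'
    have hxv : x ∈ C.verts := hsupv x (Walk.end_mem_support _)
    obtain ⟨_, hwalk⟩ := (Subgraph.connected_iff_forall_exists_walk_subgraph C).mp hconn
    obtain ⟨p', hple⟩ := hwalk hxv hv
    have hpE : ∀ e ∈ p'.edges, e ∈ C.edgeSet := by
      intro e he
      exact Subgraph.edgeSet_mono hple ((Walk.mem_edges_toSubgraph p').mpr he)
    obtain ⟨w₁, w₂, hadj, hw₁, hw₂⟩ :=
      exists_crossing (S := {w | w ∈ (Walk.cons hGab p).support}) p' hpE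
        (Walk.end_mem_support _) hvs
    exact hw₂ (hclosed w₁ hw₁ w₂ hadj)
  -- assemble
  refine ⟨p.concat hCxa.adj_sub, concat_isPath hp' hCxa.adj_sub hans, ?_, ?_, ?_⟩
  · rw [Walk.edges_concat, List.concat_eq_append, List.mem_append]
    rintro (h | h)
    · exact hans (Walk.fst_mem_support_of_mem_edges p h)
    · simp only [List.mem_singleton, Sym2.eq_iff] at h
      rcases h with ⟨h1, _⟩ | ⟨_, h2⟩
      · exact hax h1.symm
      · exact hxb h2.symm
  · intro e he
    rw [Walk.edges_concat, List.concat_eq_append, List.mem_append] at he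
    rcases he with he | he
    · exact hedges e (by simp [he])
    · simp only [List.mem_singleton] at he
      subst he
      exact (Subgraph.mem_edgeSet).mpr hCxa
  · intro v hv
    have := hcov v hv
    rw [Walk.support_cons, List.mem_cons] at this
    rw [Walk.support_concat, List.mem_append]
    rcases this with rfl | h
    · simp
    · exact Or.inl h

lemma merge_lemma [Fintype V] [DecidableEq V] {G : SimpleGraph V} {C₁ C₂ : G.Subgraph}
    (h₁ : C₁.IsCycleSubgraph) (h₂ : C₂.IsCycleSubgraph)
    (hdisj : Disjoint C₁.verts C₂.verts) {a b c d : V}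
    (hbc : G.Adj b c) (hda : G.Adj d a) (hab : C₁.Adj a b) (hcd : C₂.Adj c d) :
    ((C₁ ⊔ C₂).deleteEdges {s(a, b), s(c, d)} ⊔ G.subgraphOfAdj hbc ⊔
      G.subgraphOfAdj hda).IsCycleSubgraph ∧
    ((C₁ ⊔ C₂).deleteEdges {s(a, b), s(c, d)} ⊔ G.subgraphOfAdj hbc ⊔
      G.subgraphOfAdj hda).verts = C₁.verts ∪ C₂.verts := by
  set M := (C₁ ⊔ C₂).deleteEdges {s(a, b), s(c, d)} ⊔ G.subgraphOfAdj hbc ⊔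
    G.subgraphOfAdj hda with hMdef
  have ha1 : a ∈ C₁.verts := C₁.edge_vert hab
  have hb1 : b ∈ C₁.verts := C₁.edge_vert hab.symm
  have hc2 : c ∈ C₂.verts := C₂.edge_vert hcd
  have hd2 : d ∈ C₂.verts := C₂.edge_vert hcd.symm
  have ha2 : a ∉ C₂.verts := Set.disjoint_left.mp hdisj ha1
  have hb2 : b ∉ C₂.verts := Set.disjoint_left.mp hdisj hb1
  have hc1 : c ∉ C₁.verts := fun h => (Set.disjoint_left.mp hdisj h) hc2
  have hd1 : d ∉ C₁.verts := fun h => (Set.disjoint_left.mp hdisj h) hd2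
  have hne_ab : a ≠ b := hab.adj_sub.ne
  have hne_cd : c ≠ d := hcd.adj_sub.ne
  have hne_ac : a ≠ c := fun h => hc1 (h ▸ ha1)
  have hne_ad : a ≠ d := fun h => hd1 (h ▸ ha1)
  have hne_bc : b ≠ c := fun h => hc1 (h ▸ hb1)
  have hne_bd : b ≠ d := fun h => hd1 (h ▸ hb1)
  have hMadj : ∀ x y : V, M.Adj x y ↔
      (((C₁.Adj x y ∨ C₂.Adj x y) ∧ s(x, y) ≠ s(a, b) ∧ s(x, y) ≠ s(c, d)) ∨
        s(b, c) = s(x, y) ∨ s(d, a) = s(x, y)) := by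
    intro x y
    simp only [hMdef, Subgraph.sup_adj, Subgraph.deleteEdges_adj, Set.mem_insert_iff,
      Set.mem_singleton_iff, SimpleGraph.subgraphOfAdj_adj, not_or]
    tauto
  have hMv : M.verts = C₁.verts ∪ C₂.verts := by
    simp only [hMdef, Subgraph.verts_sup, Subgraph.deleteEdges_verts,
      SimpleGraph.subgraphOfAdj_verts]
    ext v
    simp only [Set.mem_union, Set.mem_insert_iff, Set.mem_singleton_iff]
    constructor
    · rintro (((h | h) | rfl | rfl) | rfl | rfl)
      · exact Or.inl h
      · exact Or.inr h
      · exact Or.inl hb1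
      · exact Or.inr hc2
      · exact Or.inr hd2
      · exact Or.inl ha1
    · rintro (h | h)
      · exact Or.inl (Or.inl (Or.inl h))
      · exact Or.inl (Or.inl (Or.inr h))
  have hN1 : ∀ v, C₁.neighborSet v ⊆ C₁.verts := fun v => C₁.neighborSet_subset_verts v
  have hN2 : ∀ v, C₂.neighborSet v ⊆ C₂.verts := fun v => C₂.neighborSet_subset_verts v
  -- degree computation
  have hdeg' : ∀ v ∈ M.verts, (M.neighborSet v).ncard = 2 := by
    intro v hv
    rw [hMv] at hv
    rcases hv with hv1 | hv2
    · by_cases hva : v = a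
      · subst hva
        have hNs : M.neighborSet v = insert d (C₁.neighborSet v \ {b}) := by
          ext y
          simp only [Subgraph.mem_neighborSet, hMadj, Set.mem_insert_iff, Set.mem_diff,
            Set.mem_singleton_iff]
          constructor
          · rintro (⟨h | h, hne1, hne2⟩ | h | h)
            · exact Or.inr ⟨h, fun hyb => hne1 (by rw [hyb])⟩
            · exact absurd (C₂.edge_vert h) ha2
            · rw [Sym2.eq_iff] at h
              rcases h with ⟨h1, _⟩ | ⟨_, h2⟩
              · exact absurd h1.symm hne_ab
              · exact absurd h2.symm hne_ac
            · rw [Sym2.eq_iff] at h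
              rcases h with ⟨h1, _⟩ | ⟨h1, _⟩
              · exact absurd h1 hda.ne
              · exact Or.inl h1.symm
          · rintro (rfl | ⟨h, hyb⟩)
            · exact Or.inr (Or.inr (Sym2.eq_swap))
            · refine Or.inl ⟨Or.inl h, ?_, ?_⟩
              · intro heq
                rw [Sym2.eq_iff] at heq
                rcases heq with ⟨_, h2⟩ | ⟨h1, _⟩
                · exact hyb h2
                · exact hne_ab h1
              · intro heq
                rw [Sym2.eq_iff] at heq
                rcases heq with ⟨h1, _⟩ | ⟨h1, _⟩
                · exact hne_ac h1
                · exact hne_ad h1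
        rw [hNs, Set.ncard_insert_of_notMem (fun hm => hd1 (hN1 _ hm.1)),
          Set.ncard_diff_singleton_of_mem (show b ∈ C₁.neighborSet _ from hab),
          h₁.2 _ ha1]
      · by_cases hvb : v = b
        · subst hvb
          have hNs : M.neighborSet v = insert c (C₁.neighborSet v \ {a}) := by
            ext y
            simp only [Subgraph.mem_neighborSet, hMadj, Set.mem_insert_iff, Set.mem_diff,
              Set.mem_singleton_iff]
            constructor
            · rintro (⟨h | h, hne1, hne2⟩ | h | h)
              · refine Or.inr ⟨h, fun hya => hne1 ?_⟩
                rw [hya, Sym2.eq_swap]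
              · exact absurd (C₂.edge_vert h) hb2
              · rw [Sym2.eq_iff] at h
                rcases h with ⟨_, h2⟩ | ⟨_, h2⟩
                · exact Or.inl h2.symm
                · exact absurd h2 hne_bc.symm
              · rw [Sym2.eq_iff] at h
                rcases h with ⟨h1, _⟩ | ⟨_, h2⟩
                · exact absurd h1.symm hne_bd
                · exact absurd h2 hne_ab
            · rintro (rfl | ⟨h, hya⟩)
              · exact Or.inr (Or.inl rfl)
              · refine Or.inl ⟨Or.inl h, ?_, ?_⟩
                · intro heq
                  rw [Sym2.eq_iff] at heq
                  rcases heq with ⟨h1, _⟩ | ⟨_, h2⟩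
                  · exact hne_ab h1.symm
                  · exact hya h2
                · intro heq
                  rw [Sym2.eq_iff] at heq
                  rcases heq with ⟨h1, _⟩ | ⟨h1, _⟩
                  · exact hne_bc h1
                  · exact hne_bd h1
          rw [hNs, Set.ncard_insert_of_notMem (fun hm => hc1 (hN1 _ hm.1)),
            Set.ncard_diff_singleton_of_mem (show a ∈ C₁.neighborSet _ from hab.symm),
            h₁.2 _ hb1]
        · have hNs : M.neighborSet v = C₁.neighborSet v := by
            ext y
            simp only [Subgraph.mem_neighborSet, hMadj]
            constructor
            · rintro (⟨h | h, hne1, hne2⟩ | h | h)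
              · exact h
              · exact absurd (C₂.edge_vert h) (Set.disjoint_left.mp hdisj hv1)
              · rw [Sym2.eq_iff] at h
                rcases h with ⟨h1, _⟩ | ⟨_, h2⟩
                · exact absurd h1.symm hvb
                · exact absurd hv1 (h2 ▸ hc1)
              · rw [Sym2.eq_iff] at h
                rcases h with ⟨h1, _⟩ | ⟨_, h2⟩
                · exact absurd hv1 (h1 ▸ hd1)
                · exact absurd h2.symm hva
            · intro h
              refine Or.inl ⟨Or.inl h, ?_, ?_⟩
              · intro heq
                rw [Sym2.eq_iff] at heq
                rcases heq with ⟨h1, _⟩ | ⟨h1, _⟩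
                · exact hva h1
                · exact hvb h1
              · intro heq
                rw [Sym2.eq_iff] at heq
                rcases heq with ⟨h1, _⟩ | ⟨h1, _⟩
                · exact hc1 (h1 ▸ hv1)
                · exact hd1 (h1 ▸ hv1)
          rw [hNs, h₁.2 _ hv1]
    · by_cases hvc : v = c
      · subst hvc
        have hNs : M.neighborSet v = insert b (C₂.neighborSet v \ {d}) := by
          ext y
          simp only [Subgraph.mem_neighborSet, hMadj, Set.mem_insert_iff, Set.mem_diff,
            Set.mem_singleton_iff]
          constructor
          · rintro (⟨h | h, hne1, hne2⟩ | h | h)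
            · exact absurd (C₁.edge_vert h) hc1
            · exact Or.inr ⟨h, fun hyd => hne2 (by rw [hyd])⟩
            · rw [Sym2.eq_iff] at h
              rcases h with ⟨h1, _⟩ | ⟨h1, _⟩
              · exact absurd h1 hne_bc
              · exact Or.inl h1.symm
            · rw [Sym2.eq_iff] at h
              rcases h with ⟨h1, _⟩ | ⟨_, h2⟩
              · exact absurd h1.symm hne_cd
              · exact absurd h2 hne_ac
          · rintro (rfl | ⟨h, hyd⟩)
            · exact Or.inr (Or.inl (Sym2.eq_swap))
            · refine Or.inl ⟨Or.inr h, ?_, ?_⟩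
              · intro heq
                rw [Sym2.eq_iff] at heq
                rcases heq with ⟨h1, _⟩ | ⟨h1, _⟩
                · exact hne_ac h1.symm
                · exact hne_bc h1.symm
              · intro heq
                rw [Sym2.eq_iff] at heq
                rcases heq with ⟨_, h2⟩ | ⟨h1, _⟩
                · exact hyd h2
                · exact hne_cd h1
        rw [hNs, Set.ncard_insert_of_notMem (fun hm => hb2 (hN2 _ hm.1)),
          Set.ncard_diff_singleton_of_mem (show d ∈ C₂.neighborSet _ from hcd),
          h₂.2 _ hc2]
      · by_cases hvd : v = d
        · subst hvd
          have hNs : M.neighborSet v = insert a (C₂.neighborSet v \ {c}) := by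
            ext y
            simp only [Subgraph.mem_neighborSet, hMadj, Set.mem_insert_iff, Set.mem_diff,
              Set.mem_singleton_iff]
            constructor
            · rintro (⟨h | h, hne1, hne2⟩ | h | h)
              · exact absurd (C₁.edge_vert h) hd1
              · refine Or.inr ⟨h, fun hyc => hne2 ?_⟩
                rw [hyc, Sym2.eq_swap]
              · rw [Sym2.eq_iff] at h
                rcases h with ⟨h1, _⟩ | ⟨_, h2⟩
                · exact absurd h1 hne_bd
                · exact absurd h2 hne_cd
              · rw [Sym2.eq_iff] at h
                rcases h with ⟨_, h2⟩ | ⟨_, h2⟩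
                · exact Or.inl h2.symm
                · exact absurd h2 hne_ad
            · rintro (rfl | ⟨h, hyc⟩)
              · exact Or.inr (Or.inr rfl)
              · refine Or.inl ⟨Or.inr h, ?_, ?_⟩
                · intro heq
                  rw [Sym2.eq_iff] at heq
                  rcases heq with ⟨h1, _⟩ | ⟨h1, _⟩
                  · exact hne_ad h1.symm
                  · exact hne_bd h1.symm
                · intro heq
                  rw [Sym2.eq_iff] at heq
                  rcases heq with ⟨h1, _⟩ | ⟨_, h2⟩
                  · exact hne_cd h1.symm
                  · exact hyc h2
          rw [hNs, Set.ncard_insert_of_notMem (fun hm => ha2 (hN2 _ hm.1)),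
            Set.ncard_diff_singleton_of_mem (show c ∈ C₂.neighborSet _ from hcd.symm),
            h₂.2 _ hd2]
        · have hNs : M.neighborSet v = C₂.neighborSet v := by
            ext y
            simp only [Subgraph.mem_neighborSet, hMadj]
            constructor
            · rintro (⟨h | h, hne1, hne2⟩ | h | h)
              · exact absurd (C₁.edge_vert h) (fun hm => (Set.disjoint_left.mp hdisj hm) hv2)
              · exact h
              · rw [Sym2.eq_iff] at h
                rcases h with ⟨h1, _⟩ | ⟨_, h2⟩
                · exact absurd hv2 (h1 ▸ hb2)
                · exact absurd h2.symm hvc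
              · rw [Sym2.eq_iff] at h
                rcases h with ⟨h1, _⟩ | ⟨_, h2⟩
                · exact absurd h1.symm hvd
                · exact absurd hv2 (h2 ▸ ha2)
            · intro h
              refine Or.inl ⟨Or.inr h, ?_, ?_⟩
              · intro heq
                rw [Sym2.eq_iff] at heq
                rcases heq with ⟨h1, _⟩ | ⟨h1, _⟩
                · exact ha2 (h1 ▸ hv2)
                · exact hb2 (h1 ▸ hv2)
              · intro heq
                rw [Sym2.eq_iff] at heq
                rcases heq with ⟨h1, _⟩ | ⟨h1, _⟩
                · exact hvc h1
                · exact hvd h1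
          rw [hNs, h₂.2 _ hv2]
  -- connectivity
  obtain ⟨q₁, hq₁p, hq₁e, hq₁E, hq₁s⟩ := cycle_struct h₁ hab
  obtain ⟨q₂, hq₂p, hq₂e, hq₂E, hq₂s⟩ := cycle_struct h₂ hcd
  set w : G.Walk b b :=
    q₁.append (Walk.cons hda.symm (q₂.append (Walk.cons hbc.symm Walk.nil))) with hwdef
  have hwE : ∀ e ∈ w.edges, e ∈ M.edgeSet := by
    intro e he
    induction e using Sym2.ind with
    | _ x y =>
    rw [Subgraph.mem_edgeSet, hMadj]
    simp only [hwdef, Walk.edges_append, Walk.edges_cons, Walk.edges_nil, List.mem_append,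
      List.mem_cons, List.not_mem_nil, or_false] at he
    rcases he with he | he | he | he
    · have hC : C₁.Adj x y := (Subgraph.mem_edgeSet).mp (hq₁E _ he)
      refine Or.inl ⟨Or.inl hC, ?_, ?_⟩
      · intro heq
        exact hq₁e (heq ▸ he)
      · intro heq
        have : C₁.Adj c d := (Subgraph.mem_edgeSet).mp (heq ▸ hq₁E _ he)
        exact hc1 (C₁.edge_vert this)
    · rw [he]
      exact Or.inr (Or.inr Sym2.eq_swap)
    · have hC : C₂.Adj x y := (Subgraph.mem_edgeSet).mp (hq₂E _ he)
      refine Or.inl ⟨Or.inr hC, ?_, ?_⟩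
      · intro heq
        have : C₂.Adj a b := (Subgraph.mem_edgeSet).mp (heq ▸ hq₂E _ he)
        exact ha2 (C₂.edge_vert this)
      · intro heq
        exact hq₂e (heq ▸ he)
    · rw [he]
      exact Or.inr (Or.inl Sym2.eq_swap)
  have hws : ∀ v ∈ C₁.verts ∪ C₂.verts, v ∈ w.support := by
    intro v hv
    rw [hwdef]
    rcases hv with hv | hv
    · exact (Walk.mem_support_append_iff _ _).mpr (Or.inl (hq₁s v hv))
    · refine (Walk.mem_support_append_iff _ _).mpr (Or.inr ?_)
      rw [Walk.support_cons]
      exact List.mem_cons_of_mem _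
        ((Walk.mem_support_append_iff _ _).mpr (Or.inl (hq₂s v hv)))
  have hbM : b ∈ M.verts := by rw [hMv]; exact Or.inl hb1
  have hwle : w.toSubgraph ≤ M := toSubgraph_le w hbM hwE
  have hveq : w.toSubgraph.verts = M.verts := by
    rw [Walk.verts_toSubgraph]
    ext v
    simp only [Set.mem_setOf_eq]
    constructor
    · intro hvs
      exact support_subset_verts w hwE hbM v hvs
    · intro hvM
      rw [hMv] at hvM
      exact hws v hvM
  exact ⟨⟨Subgraph.Connected.mono hwle hveq w.toSubgraph_connected, hdeg'⟩, hMv⟩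

end CycleMergeAux

/-- Let `G` be a finite simple graph admitting a 2-factor whose components are
the vertex-disjoint cycles of the family `S₀`, and suppose that every family of
cycles arising from `S₀` by iteratively merging neighbouring cycles still
admits a separant 4-cycle between two distinct current cycles whenever more
than one cycle remains.  Then `G` has a Hamiltonian cycle. -/
theorem hamiltonian_of_iterated_cycle_merging {G : SimpleGraph V} [Fintype V]
    [DecidableEq V]
    (S₀ : Set G.Subgraph) (hfin : S₀.Finite) (hne : S₀.Nonempty)
    (hcyc : ∀ C ∈ S₀, C.IsCycleSubgraph)
    (hdisj : S₀.Pairwise fun C₁ C₂ => Disjoint C₁.verts C₂.verts)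
    (hspan : ∀ v : V, ∃ C ∈ S₀, v ∈ C.verts)
    (hsep : ∀ T : Set G.Subgraph, Relation.ReflTransGen MergeStep S₀ T →
      1 < T.ncard →
      ∃ C₁ ∈ T, ∃ C₂ ∈ T, C₁ ≠ C₂ ∧
        ∃ a b c d : V, G.Adj b c ∧ G.Adj d a ∧ C₁.Adj a b ∧ C₂.Adj c d ∧
          ¬ C₁.Adj b c ∧ ¬ C₂.Adj b c ∧ ¬ C₁.Adj a d ∧ ¬ C₂.Adj a d) :
    ∃ (a : V) (p : G.Walk a a), p.IsHamiltonianCycle := by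
  classical
  have key : ∀ n (T : Set G.Subgraph), T.Finite → T.Nonempty →
      (∀ C ∈ T, C.IsCycleSubgraph) →
      (T.Pairwise fun C₁ C₂ => Disjoint C₁.verts C₂.verts) →
      (∀ v : V, ∃ C ∈ T, v ∈ C.verts) →
      Relation.ReflTransGen MergeStep S₀ T → T.ncard ≤ n →
      ∃ (a : V) (p : G.Walk a a), p.IsHamiltonianCycle := by
    intro n
    induction n with
    | zero =>
      intro T hTfin hTne _ _ _ _ hle
      have := (Set.ncard_pos hTfin).mpr hTne
      omega
    | succ n ih =>
      intro T hTfin hTne hTcyc hTdisj hTspan hRTG hle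
      by_cases hcard : T.ncard = 1
      · obtain ⟨C, rfl⟩ := Set.ncard_eq_one.mp hcard
        have hC : C.IsCycleSubgraph := hTcyc C rfl
        have hCuniv : C.verts = Set.univ := by
          ext v
          simp only [Set.mem_univ, iff_true]
          obtain ⟨C', hC', hv⟩ := hTspan v
          rw [Set.mem_singleton_iff] at hC'
          exact hC' ▸ hv
        obtain ⟨v₀, hv₀⟩ := hC.1.nonempty
        have hdeg := hC.2 v₀ hv₀
        obtain ⟨b', hb'⟩ :=
          Set.nonempty_of_ncard_ne_zero (by rw [hdeg]; exact two_ne_zero)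
        have hadj : C.Adj v₀ b' := hb'
        obtain ⟨q, hqp, hqe, _, hqs⟩ := CycleMergeAux.cycle_struct hC hadj
        refine ⟨v₀, SimpleGraph.Walk.cons hadj.adj_sub q, ?_⟩
        rw [SimpleGraph.Walk.isHamiltonianCycle_iff_isCycle_and_support_count_tail_eq_one]
        constructor
        · exact (SimpleGraph.Walk.cons_isCycle_iff q hadj.adj_sub).mpr ⟨hqp, hqe⟩
        · intro u
          rw [SimpleGraph.Walk.support_cons, List.tail_cons]
          exact List.count_eq_one_of_mem hqp.support_nodup
            (hqs u (by rw [hCuniv]; trivial))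
      · have h1 : 1 < T.ncard := by
          have := (Set.ncard_pos hTfin).mpr hTne
          omega
        obtain ⟨C₁, hC₁, C₂, hC₂, hne12, a, b, c, d, hbc, hda, hab, hcd,
          hn1, hn2, hn3, hn4⟩ := hsep T hRTG h1
        have hdisj12 : Disjoint C₁.verts C₂.verts := hTdisj hC₁ hC₂ hne12
        obtain ⟨hMcyc, hMv⟩ := CycleMergeAux.merge_lemma (hTcyc C₁ hC₁) (hTcyc C₂ hC₂)
          hdisj12 hbc hda hab hcd
        set M := (C₁ ⊔ C₂).deleteEdges {s(a, b), s(c, d)} ⊔ G.subgraphOfAdj hbc ⊔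
          G.subgraphOfAdj hda with hMdef
        set T' : Set G.Subgraph := (T \ {C₁, C₂}) ∪ {M} with hT'def
        have hstep : MergeStep T T' :=
          ⟨C₁, hC₁, C₂, hC₂, hne12, a, b, c, d, hbc, hda, hab, hcd,
            hn1, hn2, hn3, hn4, by rw [hT'def, hMdef]⟩
        have hT'fin : T'.Finite := (hTfin.diff).union (Set.finite_singleton M)
        have hT'ne : T'.Nonempty := ⟨M, Or.inr rfl⟩
        have hT'cyc : ∀ C ∈ T', C.IsCycleSubgraph := by
          rintro C (hC | hC)
          · exact hTcyc C hC.1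
          · rw [Set.mem_singleton_iff] at hC
            exact hC ▸ hMcyc
        have hdisjM : ∀ D ∈ T \ ({C₁, C₂} : Set G.Subgraph), Disjoint D.verts M.verts := by
          rintro D ⟨hD, hD'⟩
          simp only [Set.mem_insert_iff, Set.mem_singleton_iff, not_or] at hD'
          rw [hMv, Set.disjoint_union_right]
          exact ⟨hTdisj hD hC₁ hD'.1, hTdisj hD hC₂ hD'.2⟩
        have hT'disj : T'.Pairwise fun D₁ D₂ => Disjoint D₁.verts D₂.verts := by
          rintro D₁ hD₁ D₂ hD₂ hne'
          rcases hD₁ with hD₁ | hD₁ <;> rcases hD₂ with hD₂ | hD₂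
          · exact hTdisj hD₁.1 hD₂.1 hne'
          · rw [Set.mem_singleton_iff] at hD₂
            exact hD₂ ▸ hdisjM D₁ hD₁
          · rw [Set.mem_singleton_iff] at hD₁
            exact hD₁ ▸ (hdisjM D₂ hD₂).symm
          · rw [Set.mem_singleton_iff] at hD₁ hD₂
            exact absurd (hD₁.trans hD₂.symm) hne'
        have hT'span : ∀ v : V, ∃ C ∈ T', v ∈ C.verts := by
          intro v
          obtain ⟨C, hC, hv⟩ := hTspan v
          by_cases hC12 : C = C₁ ∨ C = C₂
          · refine ⟨M, Or.inr rfl, ?_⟩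
            rw [hMv]
            rcases hC12 with rfl | rfl
            · exact Or.inl hv
            · exact Or.inr hv
          · push_neg at hC12
            exact ⟨C, Or.inl ⟨hC, by simp [hC12.1, hC12.2]⟩, hv⟩
        have hsub : ({C₁, C₂} : Set G.Subgraph) ⊆ T := by
          intro C hC
          simp only [Set.mem_insert_iff, Set.mem_singleton_iff] at hC
          rcases hC with rfl | rfl
          · exact hC₁
          · exact hC₂
        have hcount : T'.ncard ≤ n := by
          have h2 : (T \ ({C₁, C₂} : Set G.Subgraph)).ncard = T.ncard - 2 := by
            rw [Set.ncard_diff hsub, Set.ncard_pair hne12]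
          have h3 := Set.ncard_union_le (T \ ({C₁, C₂} : Set G.Subgraph)) {M}
          rw [Set.ncard_singleton] at h3
          rw [hT'def]
          omega
        exact ih T' hT'fin hT'ne hT'cyc hT'disj hT'span (hRTG.tail hstep) hcount
  exact key S₀.ncard S₀ hfin hne hcyc hdisj hspan Relation.ReflTransGen.refl le_rfl
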